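/- Fix positive reals A, L (with L = L_{l+1}) and integers n > l ≥ 1. Define g(x,y) = x / ((y + n − l − 1 + xL)(Ax + 1 − y)) on the domain 0 ≤ xL ≤ 1, 0 ≤ y ≤ 1, y ≤ Ax, y + xL > 1. If A ≤ (n−l−1)L, then for all feasible (x,y), g(x,y) ≥ 1/((n−l)(A+L)), with equality attainable (e.g., at x = 1/(A+L), y = 1 − xL). -/

import Mathlib

theorem stmt_12 (n l : ℕ) (hl : 1 ≤ l) (hln : l < n) (A L : ℝ)
    (hA : 0 < A) (hL : 0 < L) (hcase : A ≤ ((n : ℝ) - l - 1) * L) :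
    (∀ x y : ℝ, 0 ≤ x → x * L ≤ 1 → 0 ≤ y → y ≤ 1 → y ≤ A * x → 1 < y + x * L →
      1 / (((n : ℝ) - l) * (A + L)) ≤
        x / ((y + (n : ℝ) - l - 1 + x * L) * (A * x + 1 - y))) ∧
    (1/(A + L)) / (((1 - (1/(A + L)) * L) + (n : ℝ) - l - 1 + (1/(A + L)) * L) *
        (A * (1/(A + L)) + 1 - (1 - (1/(A + L)) * L))) =
      1 / (((n : ℝ) - l) * (A + L)) := by
  have hln' : (l : ℝ) + 1 ≤ (n : ℝ) := by exact_mod_cast hln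
  have hm1 : (1:ℝ) ≤ (n : ℝ) - l := by linarith
  have hAL : 0 < A + L := by linarith
  constructor
  · intro x y hx hxL hy hy1 hyAx hsum
    have hxpos : 0 < x := by nlinarith
    have hd2 : 0 < A * x + 1 - y := by linarith
    have hd1 : 0 < y + (n : ℝ) - l - 1 + x * L := by linarith
    have hAx : A * x ≤ (n : ℝ) - l - 1 := by
      have h1 : L * (A * x) ≤ ((n : ℝ) - l - 1) * L := by nlinarith
      nlinarith
    rw [div_le_div_iff₀ (by positivity) (by positivity)]
    nlinarith [mul_nonneg (by linarith : (0:ℝ) ≤ y + x * L - 1)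
      (by linarith : (0:ℝ) ≤ (n : ℝ) - l - 1 + y - A * x)]
  · have h1 : (1 - (1/(A + L)) * L) + (n : ℝ) - l - 1 + (1/(A + L)) * L = (n : ℝ) - l := by
      ring
    have h2 : A * (1/(A + L)) + 1 - (1 - (1/(A + L)) * L) = 1 := by
      field_simp
      ring
    rw [h1, h2]
    field_simp
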